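/- With the construction from a semiregular divisible difference set as above, for any i ≠ ĩ and any j, j̃, |⟨e^i_j, e^ĩ_j̃⟩| = √(k−λ₁)/k, and trace(L_i* L_ĩ L_ĩ* L_i) = m²(k−λ₁)/k², where L_i has columns {e^i_j}_{j=1}^m. -/

import Mathlib

open Finset

lemma dds_char_sum {G : Type*} [AddCommGroup G] [Fintype G] [DecidableEq G]
    (k l1 l2 : ℕ)
    (N : AddSubgroup G)
    (D : Finset G) (hD : D.card = k)
    (hdd2 : ∀ g : G, g ∉ N →
        ((D ×ˢ D).filter (fun p => p.1 ≠ p.2 ∧ p.1 - p.2 = g)).card = l2)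
    (hdd1 : ∀ g : G, g ∈ N → g ≠ 0 →
        ((D ×ˢ D).filter (fun p => p.1 ≠ p.2 ∧ p.1 - p.2 = g)).card = l1)
    (ψ : AddChar G ℂ) (hψ : ∃ h ∈ N, ψ h ≠ 1) :
    (∑ g ∈ D, ψ g) * (starRingEnd ℂ) (∑ g ∈ D, ψ g) = (k : ℂ) - l1 := by
  classical
  obtain ⟨h0, h0N, h0ne⟩ := hψ
  -- character is nontrivial
  have hψ1 : ψ ≠ 1 := by
    intro h; apply h0ne; rw [h]; simp
  have hsumG : ∑ g : G, ψ g = 0 := AddChar.sum_eq_zero_of_ne_one hψ1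
  -- sum over N vanishes
  have hsumN : ∑ g ∈ Finset.univ.filter (· ∈ N), ψ g = 0 := by
    have e1 : ∑ g ∈ Finset.univ.filter (· ∈ N), ψ g = ∑ x : N, ψ (x : G) := by
      rw [← Finset.sum_subtype (Finset.univ.filter (· ∈ N)) (by simp) (fun g => ψ g)]
    rw [e1]
    have : (∑ x : N, ψ (x : G)) = ∑ x : N, (ψ.compAddMonoidHom N.subtype) x := rfl
    rw [this]
    apply AddChar.sum_eq_zero_of_ne_one
    rw [AddChar.ne_one_iff]
    exact ⟨⟨h0, h0N⟩, h0ne⟩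
  -- expand product
  have expand : (∑ g ∈ D, ψ g) * (starRingEnd ℂ) (∑ g ∈ D, ψ g)
      = ∑ p ∈ D ×ˢ D, ψ (p.1 - p.2) := by
    rw [map_sum, Finset.sum_mul_sum, Finset.sum_product]
    refine Finset.sum_congr rfl fun g _ => Finset.sum_congr rfl fun h _ => ?_
    rw [← AddChar.map_neg_eq_conj, ← AddChar.map_add_eq_mul, sub_eq_add_neg]
  rw [expand]
  rw [← Finset.sum_filter_add_sum_filter_not (D ×ˢ D) (fun p => p.1 = p.2)]
  have hdiag : ∑ p ∈ (D ×ˢ D).filter (fun p => p.1 = p.2), ψ (p.1 - p.2) = (k : ℂ) := by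
    have himg : (D ×ˢ D).filter (fun p => p.1 = p.2) = D.image (fun g => (g, g)) := by
      ext p
      simp only [Finset.mem_filter, Finset.mem_product, Finset.mem_image]
      constructor
      · rintro ⟨⟨h1, h2⟩, h3⟩; exact ⟨p.1, h1, Prod.ext rfl h3⟩
      · rintro ⟨g, hg, rfl⟩; exact ⟨⟨hg, hg⟩, rfl⟩
    rw [himg, Finset.sum_image (by simp)]
    simp [hD]
  rw [hdiag]
  have hoff : ∑ p ∈ (D ×ˢ D).filter (fun p => ¬ p.1 = p.2), ψ (p.1 - p.2) = -(l1 : ℂ) := by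
    rw [← Finset.sum_fiberwise_of_maps_to' (t := Finset.univ)
      (g := fun p : G × G => p.1 - p.2) (fun _ _ => Finset.mem_univ _) (fun c => ψ c)]
    have key : ∀ c : G, ∑ p ∈ ((D ×ˢ D).filter (fun p => ¬ p.1 = p.2)).filter
        (fun p => p.1 - p.2 = c), ψ c
        = (((D ×ˢ D).filter (fun p => p.1 ≠ p.2 ∧ p.1 - p.2 = c)).card : ℂ) * ψ c := by
      intro c
      rw [Finset.sum_const, Finset.filter_filter]
      simp [mul_comm]
    simp_rw [key]
    -- now split over c
    have hzero : ((D ×ˢ D).filter (fun p => p.1 ≠ p.2 ∧ p.1 - p.2 = (0:G))).card = 0 := by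
      rw [Finset.card_eq_zero]
      ext p; simp only [Finset.mem_filter, Finset.notMem_empty, iff_false]
      rintro ⟨-, hne, hz⟩
      exact hne (sub_eq_zero.mp hz)
    rw [← Finset.sum_filter_add_sum_filter_not Finset.univ (· ∈ N)]
    have hNin : ∑ c ∈ Finset.univ.filter (· ∈ N),
        (((D ×ˢ D).filter (fun p => p.1 ≠ p.2 ∧ p.1 - p.2 = c)).card : ℂ) * ψ c
        = -(l1 : ℂ) := by
      rw [← Finset.add_sum_erase _ _ (show (0:G) ∈ Finset.univ.filter (· ∈ N) by simp [N.zero_mem])]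
      rw [hzero]
      have : ∀ c ∈ (Finset.univ.filter (· ∈ N)).erase 0,
          (((D ×ˢ D).filter (fun p => p.1 ≠ p.2 ∧ p.1 - p.2 = c)).card : ℂ) * ψ c
          = (l1 : ℂ) * ψ c := by
        intro c hc
        rw [Finset.mem_erase, Finset.mem_filter] at hc
        rw [hdd1 c hc.2.2 hc.1]
      rw [Finset.sum_congr rfl this, ← Finset.mul_sum]
      have : ∑ c ∈ (Finset.univ.filter (· ∈ N)).erase 0, ψ c
          = (∑ c ∈ Finset.univ.filter (· ∈ N), ψ c) - ψ 0 := by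
        rw [Finset.sum_erase_eq_sub (by simp [N.zero_mem])]
      rw [this, hsumN]
      simp
    have hNout : ∑ c ∈ Finset.univ.filter (fun c => ¬ c ∈ N),
        (((D ×ˢ D).filter (fun p => p.1 ≠ p.2 ∧ p.1 - p.2 = c)).card : ℂ) * ψ c
        = 0 := by
      have : ∀ c ∈ Finset.univ.filter (fun c => ¬ c ∈ N),
          (((D ×ˢ D).filter (fun p => p.1 ≠ p.2 ∧ p.1 - p.2 = c)).card : ℂ) * ψ c
          = (l2 : ℂ) * ψ c := by
        intro c hc
        rw [Finset.mem_filter] at hc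
        rw [hdd2 c hc.2]
      rw [Finset.sum_congr rfl this, ← Finset.mul_sum]
      have hsplit : (∑ c ∈ Finset.univ.filter (· ∈ N), ψ c)
          + ∑ c ∈ Finset.univ.filter (fun c => ¬ c ∈ N), ψ c = 0 := by
        rw [Finset.sum_filter_add_sum_filter_not]; exact hsumG
      rw [hsumN, zero_add] at hsplit
      rw [hsplit, mul_zero]
    rw [hNin, hNout, add_zero]
  rw [hoff]
  ring

open Matrix in
/-- In the semiregular divisible difference set construction, cross inner products of
basis vectors from distinct subspaces all have modulus `√(k-λ₁)/k`, and
`trace(Lᵢ* Lĩ Lĩ* Lᵢ) = m²(k-λ₁)/k²`. -/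
theorem semiregular_dds_cross_terms {G : Type*} [AddCommGroup G] [Fintype G]
    [DecidableEq G] (m n k l1 l2 : ℕ) (hm : 0 < m) (hn : 0 < n) (hk : 0 < k)
    (N : AddSubgroup G) (hG : Fintype.card G = m * n) (hNcard : Nat.card N = n)
    (D : Finset G) (hD : D.card = k)
    (hdd2 : ∀ g : G, g ∉ N →
        ((D ×ˢ D).filter (fun p => p.1 ≠ p.2 ∧ p.1 - p.2 = g)).card = l2)
    (hdd1 : ∀ g : G, g ∈ N → g ≠ 0 →
        ((D ×ˢ D).filter (fun p => p.1 ≠ p.2 ∧ p.1 - p.2 = g)).card = l1)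
    (hsr1 : l1 < k) (hsr2 : k ^ 2 = l2 * (m * n))
    (η : Fin m ≃ {χ : AddChar G ℂ // ∀ h ∈ N, χ h = 1})
    (χ : Fin n → AddChar G ℂ)
    (hχ : ∀ ψ : AddChar G ℂ, ∃! i : Fin n, ∃ j : Fin m, ψ = χ i * (η j).1)
    (d : Fin k ≃ {x // x ∈ D})
    (E : Fin n → Matrix (Fin k) (Fin m) ℂ)
    (hE : ∀ i t j, E i t j = ((Real.sqrt k : ℂ))⁻¹ * (χ i * (η j).1) ((d t : G))) :
    ∀ i i' : Fin n, i ≠ i' →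
      (∀ j j' : Fin m,
        ‖∑ t, (starRingEnd ℂ) (E i t j) * E i' t j'‖ =
          Real.sqrt ((k : ℝ) - l1) / (k : ℝ)) ∧
      ((E i)ᴴ * E i' * (E i')ᴴ * E i).trace =
        (((m : ℝ) ^ 2 * ((k : ℝ) - l1) / (k : ℝ) ^ 2 : ℝ) : ℂ) := by
  intro i i' hii
  have hkR : (0:ℝ) < (k:ℝ) := by exact_mod_cast hk
  have hkl1 : (0:ℝ) ≤ (k:ℝ) - l1 := by
    have : (l1:ℝ) ≤ k := by exact_mod_cast hsr1.le
    linarith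
  have main : ∀ j j' : Fin m,
      ‖∑ t, (starRingEnd ℂ) (E i t j) * E i' t j'‖ =
        Real.sqrt ((k : ℝ) - l1) / (k : ℝ) := by
    intro j j'
    set ψ : AddChar G ℂ := (χ i * (η j).1)⁻¹ * (χ i' * (η j').1) with hψdef
    -- ψ is nontrivial on N
    have hne : ∃ h ∈ N, ψ h ≠ 1 := by
      by_contra hcon
      push_neg at hcon
      have hψmem : ∀ h ∈ N, ψ h = 1 := fun h hN => hcon h hN
      have hprod : ∀ h ∈ N, ((η j).1 * ψ) h = 1 := by
        intro h hN
        rw [AddChar.mul_apply, (η j).2 h hN, hψmem h hN, mul_one]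
      set j2 : Fin m := η.symm ⟨(η j).1 * ψ, hprod⟩ with hj2
      have hj2v : (η j2).1 = (η j).1 * ψ := by
        rw [hj2, Equiv.apply_symm_apply]
      have hkey : χ i' * (η j').1 = χ i * (η j2).1 := by
        rw [hj2v, hψdef]
        group
      obtain ⟨i0, -, huniq⟩ := hχ (χ i' * (η j').1)
      have h1 : i' = i0 := huniq i' ⟨j', rfl⟩
      have h2 : i = i0 := huniq i ⟨j2, hkey⟩
      exact hii (h2.trans h1.symm)
    have hsum := dds_char_sum k l1 l2 N D hD hdd2 hdd1 ψ hne
    -- rewrite each term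
    have hsq : ((Real.sqrt k : ℂ))⁻¹ * ((Real.sqrt k : ℂ))⁻¹ = ((k:ℝ) : ℂ)⁻¹ := by
      rw [← mul_inv, ← Complex.ofReal_mul, Real.mul_self_sqrt (Nat.cast_nonneg k)]
    have hterm : ∀ t : Fin k, (starRingEnd ℂ) (E i t j) * E i' t j'
        = ((k:ℝ) : ℂ)⁻¹ * ψ ((d t : G)) := by
      intro t
      rw [hE, hE, _root_.map_mul]
      have hc1 : (starRingEnd ℂ) ((Real.sqrt k : ℂ))⁻¹ = ((Real.sqrt k : ℂ))⁻¹ := by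
        rw [map_inv₀, Complex.conj_ofReal]
      have hc2 : (starRingEnd ℂ) ((χ i * (η j).1) ((d t : G)))
          = ((χ i * (η j).1)⁻¹) ((d t : G)) := by
        rw [AddChar.inv_apply, AddChar.map_neg_eq_conj]
      rw [hc1, hc2, hψdef]
      simp only [AddChar.mul_apply]
      rw [← hsq]; ring
    rw [Finset.sum_congr rfl (fun t _ => hterm t), ← Finset.mul_sum]
    have hsD : ∑ t : Fin k, ψ ((d t : G)) = ∑ g ∈ D, ψ g := by
      rw [← Finset.sum_coe_sort D (fun g => ψ g)]
      exact Equiv.sum_comp d (fun x : {x // x ∈ D} => ψ (x : G))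
    rw [hsD]
    -- compute the modulus
    have habs2 : ‖∑ g ∈ D, ψ g‖ = Real.sqrt ((k:ℝ) - l1) := by
      have hnseq : (Complex.normSq (∑ g ∈ D, ψ g) : ℂ) = (((k:ℝ) - l1 : ℝ) : ℂ) := by
        rw [← Complex.mul_conj, hsum]
        push_cast; ring
      have : Complex.normSq (∑ g ∈ D, ψ g) = (k:ℝ) - l1 := by
        exact_mod_cast hnseq
      rw [Complex.norm_def, this]
    rw [norm_mul, norm_inv, habs2, Complex.norm_real, Real.norm_eq_abs, abs_of_pos hkR, inv_mul_eq_div]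
  refine ⟨main, ?_⟩
  -- trace computation
  have hassoc : (E i)ᴴ * E i' * (E i')ᴴ * E i
      = ((E i)ᴴ * E i') * ((E i)ᴴ * E i')ᴴ := by
    rw [Matrix.conjTranspose_mul, Matrix.conjTranspose_conjTranspose, Matrix.mul_assoc]
  rw [hassoc]
  set B := (E i)ᴴ * E i' with hB
  have hBapp : ∀ j j' : Fin m, B j j' = ∑ t, (starRingEnd ℂ) (E i t j) * E i' t j' := by
    intro j j'
    simp [hB, Matrix.mul_apply, Matrix.conjTranspose_apply]
  have htr : (B * Bᴴ).trace = ∑ j : Fin m, ∑ j' : Fin m, B j j' * (starRingEnd ℂ) (B j j') := by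
    simp [Matrix.trace, Matrix.mul_apply, Matrix.conjTranspose_apply, Matrix.diag]
  rw [htr]
  have hval : ∀ j j' : Fin m, B j j' * (starRingEnd ℂ) (B j j')
      = ((((k:ℝ) - l1) / (k:ℝ)^2 : ℝ) : ℂ) := by
    intro j j'
    rw [Complex.mul_conj]
    have : Complex.normSq (B j j') = (‖B j j'‖)^2 := (Complex.sq_norm _).symm
    rw [this, hBapp, main j j']
    rw [div_pow, Real.sq_sqrt hkl1]
  rw [Finset.sum_congr rfl (fun j _ => Finset.sum_congr rfl (fun j' _ => hval j j'))]
  simp only [Finset.sum_const, Finset.card_univ, Fintype.card_fin, nsmul_eq_mul]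
  push_cast
  ring
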